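/- Let ρ and σ be quantum states on ℂ^d with supp(ρ) = supp(σ). Let m ≥ 1, t₁,…,t_m ∈ [0,1] and w₁,…,w_m > 0 be such that (1/ln 2)·Σ_{j=1}^m w_j f_{t_j}(x) ≥ log₂ x for all x > 0. If real numbers D̂₁,…,D̂_m satisfy D̂_j ≥ D_{f_{t_j}}(ρ‖σ) for every j, then D(ρ‖σ) ≥ −Σ_{j=1}^m (w_j/ln 2)·D̂_j; that is, the weighted estimate is a rigorous lower bound on the quantum relative entropy. -/

import Mathlib

noncomputable section

namespace QRE

open scoped ComplexOrder

open Matrix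

variable {d : ℕ}

/-- The rank-one projector `|u⟩⟨u|` associated with a vector `u ∈ ℂ^d`. -/
def rankOne (u : EuclideanSpace ℂ (Fin d)) : Matrix (Fin d) (Fin d) ℂ :=
  Matrix.of fun i j => u i * (starRingEnd ℂ) (u j)

/-- Functional calculus on the support of a Hermitian matrix: apply `g` to the
positive eigenvalues, and `0` to the rest. -/
def matFun (g : ℝ → ℝ) {A : Matrix (Fin d) (Fin d) ℂ} (hA : A.IsHermitian) :
    Matrix (Fin d) (Fin d) ℂ :=
  ∑ j, (if 0 < hA.eigenvalues j then (g (hA.eigenvalues j) : ℂ) else 0) •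
    rankOne (hA.eigenvectorBasis j)

/-- The orthogonal projection onto the support (column space) of a Hermitian matrix. -/
def suppProj {A : Matrix (Fin d) (Fin d) ℂ} (hA : A.IsHermitian) :
    Matrix (Fin d) (Fin d) ℂ :=
  matFun (fun _ => 1) hA

/-- The standard quantum `f`-divergence (for `supp ρ ⊆ supp σ`, where the `f(0⁺)` term
vanishes): `D_f(ρ‖σ) = Σ_{j : η_j > 0} Σ_{k : μ_k > 0} η_j f(μ_k/η_j) tr[P_j Q_k]`. -/
def Df (f : ℝ → ℝ) {ρ σ : Matrix (Fin d) (Fin d) ℂ}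
    (hρ : ρ.IsHermitian) (hσ : σ.IsHermitian) : ℝ :=
  ∑ j, ∑ k,
    if 0 < hρ.eigenvalues j ∧ 0 < hσ.eigenvalues k then
      hρ.eigenvalues j * f (hσ.eigenvalues k / hρ.eigenvalues j) *
        (Matrix.trace (rankOne (hρ.eigenvectorBasis j) *
          rankOne (hσ.eigenvectorBasis k))).re
    else 0

/-- `f_t(x) = (x-1)/(t(x-1)+1)`. -/
def ft (t x : ℝ) : ℝ := (x - 1) / (t * (x - 1) + 1)

/-- A quantum state: positive semidefinite with unit trace. -/
def IsState (ρ : Matrix (Fin d) (Fin d) ℂ) : Prop := ρ.PosSemidef ∧ ρ.trace = 1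

/-- The Umegaki relative entropy `tr[ρ (log₂ ρ − log₂ σ)]` (logs on the supports). -/
def relEnt {ρ σ : Matrix (Fin d) (Fin d) ℂ} (hρ : ρ.IsHermitian) (hσ : σ.IsHermitian) : ℝ :=
  (Matrix.trace (ρ * (matFun (Real.logb 2) hρ - matFun (Real.logb 2) hσ))).re

/-- `Q_α(ρ‖σ) = tr[ρ^α σ^{1-α}]`, matrix powers by functional calculus on the support. -/
def Qalpha (α : ℝ) {ρ σ : Matrix (Fin d) (Fin d) ℂ}
    (hρ : ρ.IsHermitian) (hσ : σ.IsHermitian) : ℝ :=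
  (Matrix.trace (matFun (fun y => y ^ α) hρ * matFun (fun y => y ^ (1 - α)) hσ)).re

/-- `Q₀(ρ‖σ) = tr[ρ⁰ σ]`. -/
def Qzero {ρ : Matrix (Fin d) (Fin d) ℂ} (hρ : ρ.IsHermitian)
    (σ : Matrix (Fin d) (Fin d) ℂ) : ℝ :=
  (Matrix.trace (suppProj hρ * σ)).re

/-- `Q₂(ρ‖σ) = tr[ρ² σ⁺]`, with `σ⁺` the Moore–Penrose pseudo-inverse of `σ`. -/
def Qtwo (ρ : Matrix (Fin d) (Fin d) ℂ) {σ : Matrix (Fin d) (Fin d) ℂ}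
    (hσ : σ.IsHermitian) : ℝ :=
  (Matrix.trace (ρ * ρ * matFun (fun y => y⁻¹) hσ)).re

lemma rankOne_mulVec (u x : EuclideanSpace ℂ (Fin d)) :
    rankOne u *ᵥ (WithLp.equiv 2 _) x = (inner ℂ u x : ℂ) • (WithLp.equiv 2 _) u := by
  ext i
  simp only [rankOne, Matrix.mulVec, dotProduct, Matrix.of_apply, PiLp.inner_apply,
    RCLike.inner_apply, Pi.smul_apply, smul_eq_mul, Finset.sum_mul, WithLp.equiv_apply]
  exact Finset.sum_congr rfl fun l _ => by ring

lemma trace_rankOne_mul (u v : EuclideanSpace ℂ (Fin d)) :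
    Matrix.trace (rankOne u * rankOne v) = (Complex.normSq (inner ℂ u v : ℂ) : ℂ) := by
  have : (inner ℂ u v : ℂ) * (inner ℂ v u : ℂ) = (Complex.normSq (inner ℂ u v : ℂ) : ℂ) := by
    rw [← inner_conj_symm u v]
    simp [Complex.normSq_eq_conj_mul_self, mul_comm]
  rw [← this]
  simp only [Matrix.trace, Matrix.diag, Matrix.mul_apply, rankOne, Matrix.of_apply,
    PiLp.inner_apply, RCLike.inner_apply, starRingEnd_apply]
  rw [Finset.sum_mul_sum]
  rw [Finset.sum_comm]
  congr 1; ext i; congr 1; ext l; ring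

lemma sum_mulVec' {ι : Type*} (s : Finset ι) (M : ι → Matrix (Fin d) (Fin d) ℂ)
    (v : Fin d → ℂ) : (∑ k ∈ s, M k) *ᵥ v = ∑ k ∈ s, M k *ᵥ v := by
  ext i
  simp only [Matrix.mulVec, dotProduct, Finset.sum_apply, Finset.sum_mul,
    Matrix.sum_apply]
  rw [Finset.sum_comm]

lemma spectral {A : Matrix (Fin d) (Fin d) ℂ} (hA : A.IsHermitian) :
    A = ∑ j, (hA.eigenvalues j : ℂ) • rankOne (hA.eigenvectorBasis j) := by
  apply Matrix.toEuclideanLin.injective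
  apply Module.Basis.ext hA.eigenvectorBasis.toBasis
  intro j
  simp only [OrthonormalBasis.coe_toBasis]
  apply (WithLp.equiv 2 _).injective
  simp only [WithLp.equiv_apply, Matrix.ofLp_toEuclideanLin_apply]
  show A *ᵥ ⇑(hA.eigenvectorBasis j) = (∑ k, (hA.eigenvalues k : ℂ) • rankOne (hA.eigenvectorBasis k)) *ᵥ ⇑(hA.eigenvectorBasis j)
  rw [hA.mulVec_eigenvectorBasis, sum_mulVec']
  rw [Finset.sum_congr rfl fun k _ => by
    rw [Matrix.smul_mulVec, ← WithLp.equiv_apply, rankOne_mulVec _ (hA.eigenvectorBasis j)]]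
  rw [Finset.sum_eq_single j]
  · rw [orthonormal_iff_ite.mp hA.eigenvectorBasis.orthonormal]
    simp
  · intro k _ hk
    rw [orthonormal_iff_ite.mp hA.eigenvectorBasis.orthonormal]
    simp [hk]
  · simp

lemma trace_mul_matFun (g : ℝ → ℝ) {ρ σ : Matrix (Fin d) (Fin d) ℂ}
    (hρ : ρ.IsHermitian) (hσ : σ.IsHermitian) :
    (Matrix.trace (ρ * matFun g hσ)).re =
      ∑ j, ∑ k, (if 0 < hσ.eigenvalues k then
        hρ.eigenvalues j * g (hσ.eigenvalues k) *
          Complex.normSq (inner ℂ (hρ.eigenvectorBasis j) (hσ.eigenvectorBasis k) : ℂ) else 0) := by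
  conv_lhs => rw [spectral hρ]
  unfold matFun
  rw [Finset.sum_mul]
  simp only [Finset.mul_sum, Matrix.smul_mul, Matrix.mul_smul, Matrix.trace_sum,
    Matrix.trace_smul, trace_rankOne_mul, smul_smul, Complex.re_sum]
  refine Finset.sum_congr rfl fun j _ => Finset.sum_congr rfl fun k _ => ?_
  split_ifs with h
  · rw [smul_eq_mul]
    simp only [← Complex.ofReal_mul, Complex.ofReal_re]
    ring
  · simp

lemma normSq_inner_basis {A : Matrix (Fin d) (Fin d) ℂ} (hA : A.IsHermitian) (j k : Fin d) :
    Complex.normSq (inner ℂ (hA.eigenvectorBasis j) (hA.eigenvectorBasis k) : ℂ) =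
      if j = k then 1 else 0 := by
  rw [orthonormal_iff_ite.mp hA.eigenvectorBasis.orthonormal]
  split_ifs <;> simp

lemma trace_mul_matFun_self (g : ℝ → ℝ) {ρ : Matrix (Fin d) (Fin d) ℂ}
    (hρ : ρ.IsHermitian) :
    (Matrix.trace (ρ * matFun g hρ)).re =
      ∑ j, (if 0 < hρ.eigenvalues j then hρ.eigenvalues j * g (hρ.eigenvalues j) else 0) := by
  rw [trace_mul_matFun g hρ hρ]
  refine Finset.sum_congr rfl fun j _ => ?_
  rw [Finset.sum_eq_single j]
  · rw [normSq_inner_basis hρ j j]; simp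
  · intro k _ hk
    rw [normSq_inner_basis hρ j k]
    simp [Ne.symm hk]
  · simp

lemma inner_eigvec_eq_zero {σ : Matrix (Fin d) (Fin d) ℂ} (hσ : σ.IsHermitian) (k : Fin d)
    (hk : hσ.eigenvalues k = 0) (x : EuclideanSpace ℂ (Fin d))
    (hx : (WithLp.equiv 2 _) x ∈ LinearMap.range σ.mulVecLin) :
    (inner ℂ (hσ.eigenvectorBasis k) x : ℂ) = 0 := by
  obtain ⟨y, hy⟩ := hx
  have hsymm := (Matrix.isHermitian_iff_isSymmetric.mp hσ)
  have hx' : x = Matrix.toEuclideanLin σ ((WithLp.equiv 2 _).symm y) := by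
    apply (WithLp.equiv 2 _).injective
    rw [WithLp.equiv_apply, WithLp.equiv_apply, Matrix.ofLp_toEuclideanLin_apply, WithLp.equiv_symm_apply]
    simp only [WithLp.ofLp_toLp]
    rw [← Matrix.mulVecLin_apply, hy, WithLp.equiv_apply]
  rw [hx', ← hsymm]
  have hz : Matrix.toEuclideanLin σ (hσ.eigenvectorBasis k) = (0 : EuclideanSpace ℂ (Fin d)) := by
    apply (WithLp.equiv 2 _).injective
    rw [WithLp.equiv_apply, Matrix.ofLp_toEuclideanLin_apply]
    show σ *ᵥ ⇑(hσ.eigenvectorBasis k) = _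
    rw [hσ.mulVec_eigenvectorBasis, hk]
    simp
  rw [hz, inner_zero_left]

lemma sum_pos_normSq {σ : Matrix (Fin d) (Fin d) ℂ} (hσP : σ.PosSemidef)
    (x : EuclideanSpace ℂ (Fin d))
    (hx : (WithLp.equiv 2 _) x ∈ LinearMap.range σ.mulVecLin) (hnorm : ‖x‖ = 1) :
    ∑ k, (if 0 < hσP.1.eigenvalues k then
      Complex.normSq (inner ℂ x (hσP.1.eigenvectorBasis k) : ℂ) else 0) = 1 := by
  have h1 : ∀ k, (if 0 < hσP.1.eigenvalues k then
      Complex.normSq (inner ℂ x (hσP.1.eigenvectorBasis k) : ℂ) else 0) =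
      Complex.normSq (inner ℂ x (hσP.1.eigenvectorBasis k) : ℂ) := by
    intro k
    split_ifs with h
    · rfl
    · have hk : hσP.1.eigenvalues k = 0 :=
        le_antisymm (not_lt.mp h) (hσP.eigenvalues_nonneg k)
      have := inner_eigvec_eq_zero hσP.1 k hk x hx
      rw [← inner_conj_symm] at this
      have : (inner ℂ x (hσP.1.eigenvectorBasis k) : ℂ) = 0 := by
        simpa using congrArg (starRingEnd ℂ) this
      rw [this]
      simp
  simp only [h1]
  have hP := hσP.1.eigenvectorBasis.sum_inner_mul_inner x x
  have : ∀ k, (inner ℂ x (hσP.1.eigenvectorBasis k) : ℂ) * inner ℂ (hσP.1.eigenvectorBasis k) x =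
      (Complex.normSq (inner ℂ x (hσP.1.eigenvectorBasis k) : ℂ) : ℂ) := by
    intro k
    rw [← inner_conj_symm x]
    simp [Complex.normSq_eq_conj_mul_self, mul_comm]
  rw [Finset.sum_congr rfl fun k _ => this k] at hP
  have hx1 : (inner ℂ x x : ℂ) = 1 := by
    rw [inner_self_eq_norm_sq_to_K, hnorm]; norm_num
  rw [hx1] at hP
  exact_mod_cast congrArg Complex.re hP

/-- Rigorous lower bound on the quantum relative entropy: if the quadrature
overestimates `log₂` and the `D̂_j` overestimate the `f_{t_j}`-divergences, then
`D(ρ‖σ) ≥ −Σ_j (w_j/ln 2) D̂_j`. -/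
theorem lower_bound_relEnt (ρ σ : Matrix (Fin d) (Fin d) ℂ)
    (hρ : IsState ρ) (hσ : IsState σ)
    (hsupp : LinearMap.range ρ.mulVecLin = LinearMap.range σ.mulVecLin)
    (m : ℕ) (hm : 1 ≤ m) (t w : Fin m → ℝ)
    (ht : ∀ j, t j ∈ Set.Icc (0 : ℝ) 1) (hw : ∀ j, 0 < w j)
    (happrox : ∀ x > (0 : ℝ),
      Real.logb 2 x ≤ (1 / Real.log 2) * ∑ j, w j * ft (t j) x)
    (Dhat : Fin m → ℝ)
    (hest : ∀ j, Df (ft (t j)) hρ.1.1 hσ.1.1 ≤ Dhat j) :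
    -∑ j, (w j / Real.log 2) * Dhat j ≤ relEnt hρ.1.1 hσ.1.1 := by
  set η : Fin d → ℝ := hρ.1.1.eigenvalues with hη
  set μ : Fin d → ℝ := hσ.1.1.eigenvalues with hμ
  set u : Fin d → EuclideanSpace ℂ (Fin d) := ⇑hρ.1.1.eigenvectorBasis with hu
  set v : Fin d → EuclideanSpace ℂ (Fin d) := ⇑hσ.1.1.eigenvectorBasis with hv
  have hηnn : ∀ j, 0 ≤ η j := hρ.1.eigenvalues_nonneg
  have hcnn : ∀ j k, 0 ≤ Complex.normSq (inner ℂ (u j) (v k) : ℂ) := fun j k => Complex.normSq_nonneg _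
  -- sum over positive σ-eigenvalues of c j k equals 1 when η j > 0
  have key : ∀ j, 0 < η j → ∑ k, (if 0 < μ k then Complex.normSq (inner ℂ (u j) (v k) : ℂ) else 0) = 1 := by
    intro j hj
    refine sum_pos_normSq hσ.1 (u j) ?_ (hρ.1.1.eigenvectorBasis.orthonormal.1 j)
    rw [← hsupp]
    refine ⟨((η j)⁻¹ : ℂ) • (WithLp.equiv 2 _) (u j), ?_⟩
    rw [Matrix.mulVecLin_apply, Matrix.mulVec_smul]
    show _ • (ρ *ᵥ ⇑(hρ.1.1.eigenvectorBasis j)) = _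
    rw [hρ.1.1.mulVec_eigenvectorBasis]
    ext i
    simp only [Pi.smul_apply, smul_eq_mul, Complex.real_smul, ← hη, ← hu, WithLp.equiv_apply]
    rw [← mul_assoc, inv_mul_cancel₀ (show ((η j : ℝ) : ℂ) ≠ 0 by exact_mod_cast ne_of_gt hj),
      one_mul]
  -- express relEnt
  have hrel : relEnt hρ.1.1 hσ.1.1 =
      ∑ j, ∑ k, (if 0 < η j ∧ 0 < μ k then
        η j * (Real.logb 2 (η j) - Real.logb 2 (μ k)) * Complex.normSq (inner ℂ (u j) (v k) : ℂ) else 0) := by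
    rw [relEnt, Matrix.mul_sub, Matrix.trace_sub, Complex.sub_re,
      trace_mul_matFun_self (Real.logb 2) hρ.1.1, trace_mul_matFun (Real.logb 2) hρ.1.1 hσ.1.1]
    simp only [← hη, ← hμ, ← hu, ← hv]
    rw [← Finset.sum_sub_distrib]
    refine Finset.sum_congr rfl fun j _ => ?_
    by_cases hj : 0 < η j
    · rw [if_pos hj, ← mul_one (η j * Real.logb 2 (η j)), ← key j hj, Finset.mul_sum, ← Finset.sum_sub_distrib]
      refine Finset.sum_congr rfl fun k _ => ?_
      by_cases hk : 0 < μ k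
      · rw [if_pos hk, if_pos hk, if_pos ⟨hj, hk⟩]
        ring
      · rw [if_neg hk, if_neg hk, if_neg (fun h => hk h.2)]
        ring
    · have hj0 : η j = 0 := le_antisymm (not_lt.mp hj) (hηnn j)
      rw [if_neg hj]
      rw [show ∑ k, (if 0 < μ k then η j * Real.logb 2 (μ k) * Complex.normSq (inner ℂ (u j) (v k) : ℂ) else 0) = 0 from
        Finset.sum_eq_zero fun k _ => by split_ifs <;> simp [hj0]]
      rw [show ∑ k, (if 0 < η j ∧ 0 < μ k then
          η j * (Real.logb 2 (η j) - Real.logb 2 (μ k)) * Complex.normSq (inner ℂ (u j) (v k) : ℂ) else 0) = 0 from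
        Finset.sum_eq_zero fun k _ => by
          rw [if_neg (fun h => hj h.1)]]
      ring
  -- the negated entropy as a single sum with logb of quotient
  have hrel2 : -relEnt hρ.1.1 hσ.1.1 =
      ∑ j, ∑ k, (if 0 < η j ∧ 0 < μ k then
        η j * Real.logb 2 (μ k / η j) * Complex.normSq (inner ℂ (u j) (v k) : ℂ) else 0) := by
    rw [hrel, ← Finset.sum_neg_distrib]
    refine Finset.sum_congr rfl fun j _ => ?_
    rw [← Finset.sum_neg_distrib]
    refine Finset.sum_congr rfl fun k _ => ?_
    split_ifs with h
    · rw [Real.logb_div (ne_of_gt h.2) (ne_of_gt h.1)]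
      ring
    · ring
  -- bound by the quadrature
  have hbound : -relEnt hρ.1.1 hσ.1.1 ≤
      ∑ i, (w i / Real.log 2) * Df (ft (t i)) hρ.1.1 hσ.1.1 := by
    rw [hrel2]
    have hDf : ∀ i, Df (ft (t i)) hρ.1.1 hσ.1.1 =
        ∑ j, ∑ k, (if 0 < η j ∧ 0 < μ k then
          η j * ft (t i) (μ k / η j) * Complex.normSq (inner ℂ (u j) (v k) : ℂ) else 0) := by
      intro i
      rw [Df]
      simp only [← hη, ← hμ, ← hu, ← hv, trace_rankOne_mul, Complex.ofReal_re]
    calc ∑ j, ∑ k, (if 0 < η j ∧ 0 < μ k then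
          η j * Real.logb 2 (μ k / η j) * Complex.normSq (inner ℂ (u j) (v k) : ℂ) else 0)
        ≤ ∑ j, ∑ k, (if 0 < η j ∧ 0 < μ k then
          η j * ((1 / Real.log 2) * ∑ i, w i * ft (t i) (μ k / η j)) * Complex.normSq (inner ℂ (u j) (v k) : ℂ) else 0) := by
          refine Finset.sum_le_sum fun j _ => Finset.sum_le_sum fun k _ => ?_
          split_ifs with h
          · exact mul_le_mul_of_nonneg_right
              (mul_le_mul_of_nonneg_left
                (happrox _ (div_pos h.2 h.1)) (hηnn j)) (hcnn j k)
          · exact le_rfl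
      _ = ∑ i, (w i / Real.log 2) * Df (ft (t i)) hρ.1.1 hσ.1.1 := by
          simp only [hDf]
          have hsplit : ∀ j k : Fin d, (if 0 < η j ∧ 0 < μ k then
              η j * ((1 / Real.log 2) * ∑ i, w i * ft (t i) (μ k / η j)) *
                Complex.normSq (inner ℂ (u j) (v k) : ℂ) else 0) =
              ∑ i, (w i / Real.log 2) * (if 0 < η j ∧ 0 < μ k then
                η j * ft (t i) (μ k / η j) * Complex.normSq (inner ℂ (u j) (v k) : ℂ) else 0) := by
            intro j k
            split_ifs with h
            · simp only [Finset.mul_sum, Finset.sum_mul]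
              exact Finset.sum_congr rfl fun i _ => by ring
            · simp
          simp only [hsplit]
          rw [Finset.sum_congr rfl fun j (_ : j ∈ Finset.univ) => Finset.sum_comm]
          rw [Finset.sum_comm]
          simp only [Finset.mul_sum]
  have hwn : ∀ i, 0 ≤ w i / Real.log 2 := by
    intro i
    exact div_nonneg (le_of_lt (hw i)) (le_of_lt (Real.log_pos (by norm_num)))
  have : ∑ i, (w i / Real.log 2) * Df (ft (t i)) hρ.1.1 hσ.1.1 ≤
      ∑ i, (w i / Real.log 2) * Dhat i :=
    Finset.sum_le_sum fun i _ => mul_le_mul_of_nonneg_left (hest i) (hwn i)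
  have h2 : ∀ i, (w i / Real.log 2) * Dhat i = (w i / Real.log 2) * Dhat i := fun _ => rfl
  linarith [hbound, this]


end QRE
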